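/- Let a, b ≥ 0 be real numbers and α, β ∈ ℂ. Then the matrix ρ_{a,b,α,β} ∈ M_2(ℂ)⊗M_2(ℂ) is block-positive if and only if |α| + |β| ≤ √(ab). -/

import Mathlib

open Matrix ComplexOrder

noncomputable section

/-- The product (simple tensor) vector `ξ ⊗ η` in `ℂ^m ⊗ ℂ^n = ℂ^{m × n}`. -/
def prodVec {m n : ℕ} (ξ : Fin m → ℂ) (η : Fin n → ℂ) : Fin m × Fin n → ℂ :=
  fun p => ξ p.1 * η p.2

/-- A matrix `ρ ∈ M_m(ℂ) ⊗ M_n(ℂ)`, viewed as a matrix indexed by pairs via the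
lexicographically ordered product basis, is block-positive if
`⟨ξ ⊗ η | ρ | ξ ⊗ η⟩ ≥ 0` for all `ξ ∈ ℂ^m`, `η ∈ ℂ^n`. -/
def BlockPos {m n : ℕ} (ρ : Matrix (Fin m × Fin n) (Fin m × Fin n) ℂ) : Prop :=
  ∀ (ξ : Fin m → ℂ) (η : Fin n → ℂ),
    0 ≤ star (prodVec ξ η) ⬝ᵥ ρ *ᵥ prodVec ξ η

/-- The matrix `ρ_{a,b,α,β} ∈ M_2(ℂ) ⊗ M_2(ℂ)`, given in the lexicographically
ordered product basis by the rows `(a,0,0,α)`, `(0,0,β,0)`, `(0,β̄,0,0)`, `(ᾱ,0,0,b)`. -/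
def rhoMat (a b : ℝ) (α β : ℂ) : Matrix (Fin 2 × Fin 2) (Fin 2 × Fin 2) ℂ :=
  Matrix.of fun p q =>
    if p = ((0 : Fin 2), (0 : Fin 2)) ∧ q = ((0 : Fin 2), (0 : Fin 2)) then (a : ℂ)
    else if p = ((1 : Fin 2), (1 : Fin 2)) ∧ q = ((1 : Fin 2), (1 : Fin 2)) then (b : ℂ)
    else if p = ((0 : Fin 2), (0 : Fin 2)) ∧ q = ((1 : Fin 2), (1 : Fin 2)) then α
    else if p = ((1 : Fin 2), (1 : Fin 2)) ∧ q = ((0 : Fin 2), (0 : Fin 2)) then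
      (starRingEnd ℂ) α
    else if p = ((0 : Fin 2), (1 : Fin 2)) ∧ q = ((1 : Fin 2), (0 : Fin 2)) then β
    else if p = ((1 : Fin 2), (0 : Fin 2)) ∧ q = ((0 : Fin 2), (1 : Fin 2)) then
      (starRingEnd ℂ) β
    else 0

/-- The real quadratic form associated to `rhoMat`. -/
def qForm (a b : ℝ) (α β : ℂ) (x0 x1 y0 y1 : ℂ) : ℝ :=
  a * Complex.normSq (x0 * y0) + b * Complex.normSq (x1 * y1)
    + 2 * (α * (starRingEnd ℂ) (x0 * y0) * (x1 * y1)).re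
    + 2 * (β * (starRingEnd ℂ) (x0 * y1) * (x1 * y0)).re

lemma quadForm_eq (a b : ℝ) (α β : ℂ) (ξ η : Fin 2 → ℂ) :
    star (prodVec ξ η) ⬝ᵥ rhoMat a b α β *ᵥ prodVec ξ η =
      ((qForm a b α β (ξ 0) (ξ 1) (η 0) (η 1) : ℝ) : ℂ) := by
  have e1 : ∀ z : ℂ, ((Complex.normSq z : ℝ) : ℂ) = z * (starRingEnd ℂ) z := by
    intro z; rw [Complex.mul_conj]
  have e2 : ∀ z : ℂ, (2:ℂ) * ((z.re : ℝ) : ℂ) = z + (starRingEnd ℂ) z := by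
    intro z; rw [Complex.add_conj]; push_cast; ring
  unfold qForm
  push_cast
  rw [e1, e1, e2, e2]
  simp only [dotProduct, mulVec, prodVec, rhoMat, Fintype.sum_prod_type, Fin.sum_univ_two,
    Prod.ext_iff, Matrix.of_apply, Pi.star_apply, star_mul', RCLike.star_def]
  norm_num [Prod.ext_iff, Fin.ext_iff]
  ring

lemma blockPos_iff_qForm (a b : ℝ) (α β : ℂ) :
    BlockPos (rhoMat a b α β) ↔ ∀ x0 x1 y0 y1 : ℂ, 0 ≤ qForm a b α β x0 x1 y0 y1 := by
  constructor
  · intro h x0 x1 y0 y1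
    have := h ![x0, x1] ![y0, y1]
    rw [quadForm_eq] at this
    simpa using Complex.zero_le_real.mp (by simpa using this)
  · intro h ξ η
    rw [quadForm_eq]
    exact Complex.zero_le_real.mpr (h _ _ _ _)

lemma phase_exists (α : ℂ) : ∃ A : ℂ, Complex.normSq A = 1 ∧
    α * (starRingEnd ℂ) A = (‖α‖ : ℂ) := by
  by_cases hα : α = 0
  · exact ⟨1, by simp, by simp [hα]⟩
  · refine ⟨α / ‖α‖, ?_, ?_⟩
    · simp [Complex.normSq_div, Complex.normSq_eq_norm_sq, pow_two,
        div_self (mul_ne_zero (norm_ne_zero_iff.mpr hα) (norm_ne_zero_iff.mpr hα))]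
    · rw [map_div₀, Complex.conj_ofReal, mul_div_assoc', Complex.mul_conj]
      rw [Complex.normSq_eq_norm_sq]
      have h0 : (‖α‖ : ℂ) ≠ 0 := by
        simpa using norm_ne_zero_iff.mpr hα
      field_simp
      norm_cast

/-- For `a, b ≥ 0` and `α, β ∈ ℂ`, the matrix `ρ_{a,b,α,β}` is block-positive
if and only if `|α| + |β| ≤ √(ab)`. -/
theorem rhoMat_blockPos_iff (a b : ℝ) (ha : 0 ≤ a) (hb : 0 ≤ b) (α β : ℂ) :
    BlockPos (rhoMat a b α β) ↔ ‖α‖ + ‖β‖ ≤ Real.sqrt (a * b) := by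
  rw [blockPos_iff_qForm]
  constructor
  · intro h
    obtain ⟨A, hA, hαA⟩ := phase_exists α
    obtain ⟨B, hB, hβB⟩ := phase_exists β
    obtain ⟨c, hc⟩ := IsAlgClosed.exists_pow_nat_eq ((starRingEnd ℂ) A * (starRingEnd ℂ) B)
      (n := 2) two_pos
    have hcns : Complex.normSq c = 1 := by
      have h2 : Complex.normSq c ^ 2 = 1 := by
        have : Complex.normSq (c ^ 2) = 1 := by
          rw [hc]; simp [Complex.normSq_conj, hA, hB]
        simpa [map_pow] using this
      nlinarith [Complex.normSq_nonneg c]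
    have hc0 : c ≠ 0 := by intro h0; simp [h0] at hcns
    have hmc : c * (starRingEnd ℂ) c = 1 := by
      rw [Complex.mul_conj, hcns]; norm_num
    have hcc : (starRingEnd ℂ) c = c⁻¹ := eq_inv_of_mul_eq_one_right hmc
    have hAA : A * (starRingEnd ℂ) A = 1 := by
      rw [Complex.mul_conj, hA]; norm_num
    have key : ∀ t s : ℝ, 0 ≤ t → 0 ≤ s →
        0 ≤ a * t^2 + b * s^2 - 2 * (‖α‖ + ‖β‖) * (t * s) := by
      intro t s ht hs
      have hq := h (t : ℂ) ((s : ℂ) * c) 1 (-(starRingEnd ℂ) A / c)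
      unfold qForm at hq
      have hx1y1 : (s : ℂ) * c * (-(starRingEnd ℂ) A / c) = -((s:ℂ) * (starRingEnd ℂ) A) := by
        field_simp
      have hn0 : Complex.normSq ((t:ℂ) * 1) = t ^ 2 := by
        simp [Complex.normSq_ofReal]; ring
      have hn1 : Complex.normSq ((s : ℂ) * c * (-(starRingEnd ℂ) A / c)) = s ^ 2 := by
        rw [hx1y1]
        simp [Complex.normSq_mul, Complex.normSq_conj, hA, Complex.normSq_ofReal]
        ring
      have hterm1 : α * (starRingEnd ℂ) ((t:ℂ) * 1) * ((s:ℂ) * c * (-(starRingEnd ℂ) A / c))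
          = ((-(t * s * ‖α‖) : ℝ) : ℂ) := by
        rw [hx1y1, show (starRingEnd ℂ) ((t:ℂ) * 1) = (t:ℂ) by
          simp [Complex.conj_ofReal]]
        push_cast
        linear_combination (-(t:ℂ) * (s:ℂ)) * hαA
      have hconjv : (starRingEnd ℂ) ((t:ℂ) * (-(starRingEnd ℂ) A / c)) = (t:ℂ) * (-A * c) := by
        rw [_root_.map_mul, map_div₀, map_neg, Complex.conj_conj, Complex.conj_ofReal, hcc,
          div_inv_eq_mul]
      have hterm2 : β * (starRingEnd ℂ) ((t:ℂ) * (-(starRingEnd ℂ) A / c)) * ((s:ℂ) * c * 1)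
          = ((-(t * s * ‖β‖) : ℝ) : ℂ) := by
        rw [hconjv]
        calc β * ((t:ℂ) * (-A * c)) * ((s:ℂ) * c * 1)
            = -((t:ℂ) * (s:ℂ)) * β * A * c ^ 2 := by ring
          _ = -((t:ℂ) * (s:ℂ)) * β * A * ((starRingEnd ℂ) A * (starRingEnd ℂ) B) := by rw [hc]
          _ = -((t:ℂ) * (s:ℂ)) * (A * (starRingEnd ℂ) A) * (β * (starRingEnd ℂ) B) := by ring
          _ = -((t:ℂ) * (s:ℂ)) * 1 * ((‖β‖ : ℝ) : ℂ) := by rw [hAA, hβB]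
          _ = ((-(t * s * ‖β‖) : ℝ) : ℂ) := by push_cast; ring
      rw [hn0, hn1, hterm1, hterm2] at hq
      simp only [Complex.ofReal_re] at hq
      linarith
    rcases lt_or_eq_of_le ha with hapos | ha0
    · have hcsum : 0 ≤ ‖α‖ + ‖β‖ := by positivity
      have hk := key ((‖α‖ + ‖β‖) / a) 1
        (div_nonneg hcsum hapos.le) zero_le_one
      rw [Real.le_sqrt hcsum (mul_nonneg ha hb)]
      have hda : (‖α‖ + ‖β‖) / a * a = ‖α‖ + ‖β‖ :=
        div_mul_cancel₀ _ (ne_of_gt hapos)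
      nlinarith [hk, hda, sq_nonneg ((‖α‖ + ‖β‖) / a)]
    · have hcle : ‖α‖ + ‖β‖ ≤ 0 := by
        by_contra hpos
        push_neg at hpos
        have hk1 := key (b / (‖α‖ + ‖β‖)) 1
          (div_nonneg hb hpos.le) zero_le_one
        have hk2 := key 1 1 zero_le_one zero_le_one
        have hdm : b / (‖α‖ + ‖β‖) * (‖α‖ + ‖β‖) = b :=
          div_mul_cancel₀ _ (ne_of_gt hpos)
        nlinarith [hk1, hk2, hdm, div_nonneg hb hpos.le]
      exact le_trans hcle (Real.sqrt_nonneg _)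
  · intro hle x0 x1 y0 y1
    unfold qForm
    set p := ‖x0‖
    set q := ‖y0‖
    set r := ‖x1‖
    set s := ‖y1‖
    have h1 : -(‖α‖ * (p * q * (r * s))) ≤ (α * (starRingEnd ℂ) (x0 * y0) * (x1 * y1)).re := by
      have hh := abs_le.mp (Complex.abs_re_le_norm (α * (starRingEnd ℂ) (x0 * y0) * (x1 * y1)))
      have habs : ‖α * (starRingEnd ℂ) (x0 * y0) * (x1 * y1)‖
          = ‖α‖ * (p * q * (r * s)) := by
        simp only [norm_mul, Complex.norm_conj]; ring
      rw [habs] at hh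
      linarith [hh.1]
    have h2 : -(‖β‖ * (p * q * (r * s))) ≤ (β * (starRingEnd ℂ) (x0 * y1) * (x1 * y0)).re := by
      have hh := abs_le.mp (Complex.abs_re_le_norm (β * (starRingEnd ℂ) (x0 * y1) * (x1 * y0)))
      have habs : ‖β * (starRingEnd ℂ) (x0 * y1) * (x1 * y0)‖
          = ‖β‖ * (p * q * (r * s)) := by
        simp only [norm_mul, Complex.norm_conj]; ring
      rw [habs] at hh
      linarith [hh.1]
    have hn1 : Complex.normSq (x0 * y0) = (p * q)^2 := by
      rw [← Complex.sq_norm]; simp only [norm_mul]; rfl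
    have hn2 : Complex.normSq (x1 * y1) = (r * s)^2 := by
      rw [← Complex.sq_norm]; simp only [norm_mul]; rfl
    rw [hn1, hn2]
    have hp : 0 ≤ p := norm_nonneg _
    have hq : 0 ≤ q := norm_nonneg _
    have hr : 0 ≤ r := norm_nonneg _
    have hs : 0 ≤ s := norm_nonneg _
    have hsa := Real.sq_sqrt ha
    have hsb := Real.sq_sqrt hb
    have hsab : Real.sqrt (a*b) = Real.sqrt a * Real.sqrt b := Real.sqrt_mul ha b
    have hprod : 0 ≤ (Real.sqrt (a*b) - (‖α‖ + ‖β‖)) * (p*q*(r*s)) :=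
      mul_nonneg (by linarith) (by positivity)
    have e1 : a * (p*q)^2 = (Real.sqrt a * (p*q))^2 := by linear_combination (-(p*q)^2) * hsa
    have e2 : b * (r*s)^2 = (Real.sqrt b * (r*s))^2 := by linear_combination (-(r*s)^2) * hsb
    have e3 : Real.sqrt (a*b) * (p*q*(r*s))
        = (Real.sqrt a * (p*q)) * (Real.sqrt b * (r*s)) := by rw [hsab]; ring
    have hAMGM : 2 * Real.sqrt (a*b) * (p*q*(r*s)) ≤ a * (p*q)^2 + b * (r*s)^2 := by
      nlinarith [sq_nonneg (Real.sqrt a * (p*q) - Real.sqrt b * (r*s)), e1, e2, e3]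
    nlinarith [h1, h2, hprod, hAMGM]

end
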